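/- Let 𝔅 be the Jacobson radical of the standard principal hereditary order 𝔄 in M_n(ℚ_p) with parameter e. Let j ≥ 1 be an integer, set t = ⌈j/e⌉ and k = ⌊j/2⌋ + 1, and let β ∈ M_n(ℚ_p) be such that p^t·β ∈ 𝔅^(et−j). Let ψ : (ℚ_p, +) → ℂˣ be a group homomorphism that is trivial on pℤ_p. Then the map x ↦ ψ(Tr(β(x−1))) is a group homomorphism from the multiplicative group U_𝔄(k) = 1 + 𝔅^k to ℂˣ, where Tr denotes the matrix trace. -/

import Mathlib

open scoped Pointwise

noncomputable section

/-- The `ℤ_p`-submodule `p^k ℤ_p` of `ℚ_p`, for `k : ℤ`. -/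
def pAdicLat (p : ℕ) [Fact p.Prime] (k : ℤ) : Submodule ℤ_[p] ℚ_[p] :=
  Submodule.span ℤ_[p] {(p : ℚ_[p]) ^ k}

/-- The `ℤ_p`-submodule of `M_n(ℚ_p)` whose `(i,j)` entry lies in `p^(f i j) ℤ_p`. -/
def blockMod (p : ℕ) [Fact p.Prime] (n m₀ : ℕ) (f : Fin n → Fin n → ℤ) :
    Submodule ℤ_[p] (Matrix (Fin n) (Fin n) ℚ_[p]) where
  carrier := {x | ∀ i j, x i j ∈ pAdicLat p (f i j)}
  add_mem' := fun hx hy i j => add_mem (hx i j) (hy i j)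
  zero_mem' := fun i j => zero_mem _
  smul_mem' := fun c x hx i j => Submodule.smul_mem _ c (hx i j)

/-- The standard principal hereditary order `𝔄` with parameter `e`, blocks of size `m₀`:
entries of the `(a,b)` block (where `a = i/m₀`, `b = j/m₀`) lie in `ℤ_p` if `a ≤ b`
and in `pℤ_p` if `a > b`. -/
def stdOrder (p : ℕ) [Fact p.Prime] (n m₀ : ℕ) :
    Submodule ℤ_[p] (Matrix (Fin n) (Fin n) ℚ_[p]) :=
  blockMod p n m₀ (fun i j => if i.val / m₀ ≤ j.val / m₀ then 0 else 1)

/-- The Jacobson radical `𝔅` of the standard principal hereditary order: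
entries of the `(a,b)` block lie in `ℤ_p` if `a < b` and in `pℤ_p` if `a ≥ b`. -/
def stdRadical (p : ℕ) [Fact p.Prime] (n m₀ : ℕ) :
    Submodule ℤ_[p] (Matrix (Fin n) (Fin n) ℚ_[p]) :=
  blockMod p n m₀ (fun i j => if i.val / m₀ < j.val / m₀ then 0 else 1)

/-- Powers `𝔅^i` of the radical, with the convention `𝔅^0 = 𝔄`. -/
def radPow (p : ℕ) [Fact p.Prime] (n m₀ : ℕ) (i : ℕ) :
    Submodule ℤ_[p] (Matrix (Fin n) (Fin n) ℚ_[p]) :=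
  if i = 0 then stdOrder p n m₀ else stdRadical p n m₀ ^ i

namespace SCH
variable (p : ℕ) [Fact p.Prime]

lemma norm_p_zpow (k : ℤ) : ‖(p : ℚ_[p]) ^ k‖ = (p : ℝ) ^ (-k) := by
  rw [norm_zpow, Padic.norm_p, inv_zpow, ← zpow_neg]

lemma mem_pAdicLat_iff (k : ℤ) (x : ℚ_[p]) :
    x ∈ pAdicLat p k ↔ ‖x‖ ≤ (p : ℝ) ^ (-k) := by
  have hp0 : (p : ℚ_[p]) ≠ 0 := Nat.cast_ne_zero.mpr (Fact.out (p := p.Prime)).ne_zero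
  rw [pAdicLat, Submodule.mem_span_singleton]
  constructor
  · rintro ⟨c, rfl⟩
    rw [Algebra.smul_def]
    rw [norm_mul]
    calc ‖(algebraMap ℤ_[p] ℚ_[p]) c‖ * ‖(p : ℚ_[p]) ^ k‖
        ≤ 1 * ‖(p : ℚ_[p]) ^ k‖ := by
          gcongr
          exact c.2
      _ = (p:ℝ) ^ (-k) := by rw [one_mul, norm_p_zpow]
  · intro hx
    have hc : ‖x * (p : ℚ_[p]) ^ (-k)‖ ≤ 1 := by
      rw [norm_mul, norm_p_zpow, neg_neg]
      have hppos : (0:ℝ) < (p:ℝ) := by exact_mod_cast (Fact.out (p := p.Prime)).pos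
      calc ‖x‖ * (p:ℝ)^k ≤ (p:ℝ)^(-k) * (p:ℝ)^k :=
            mul_le_mul_of_nonneg_right hx (by positivity)
        _ = 1 := by rw [← zpow_add₀ hppos.ne' (-k) k, neg_add_cancel, zpow_zero]
    refine ⟨⟨_, hc⟩, ?_⟩
    show x * (p : ℚ_[p]) ^ (-k) * (p : ℚ_[p]) ^ k = x
    rw [mul_assoc, ← zpow_add₀ hp0]; simp

lemma pAdicLat_mono {k l : ℤ} (h : k ≤ l) : pAdicLat p l ≤ pAdicLat p k := by
  intro x hx
  rw [mem_pAdicLat_iff] at hx ⊢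
  refine hx.trans ?_
  have hp1 : (1:ℝ) ≤ (p:ℝ) := by exact_mod_cast (Fact.out (p := p.Prime)).one_lt.le
  exact zpow_le_zpow_right₀ hp1 (by omega)

lemma mul_mem_pAdicLat {k l : ℤ} {x y : ℚ_[p]} (hx : x ∈ pAdicLat p k)
    (hy : y ∈ pAdicLat p l) : x * y ∈ pAdicLat p (k + l) := by
  rw [mem_pAdicLat_iff] at hx hy ⊢
  have hppos : (0:ℝ) < (p:ℝ) := by exact_mod_cast (Fact.out (p := p.Prime)).pos
  rw [norm_mul, neg_add, zpow_add₀ hppos.ne']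
  exact mul_le_mul hx hy (norm_nonneg _) (by positivity)

/-- exponent function: `⌈(i + a - b)/e⌉` with `a = r/m₀`, `b = c/m₀`. -/
def expo (e m₀ : ℕ) (i : ℕ) (r c : ℕ) : ℤ :=
  ⌈((i : ℚ) + (r / m₀ : ℕ) - ((c / m₀ : ℕ) : ℚ)) / (e : ℚ)⌉

lemma ceil_div_zero {e : ℕ} (he : 0 < e) {m : ℤ} (h1 : -(e:ℤ) < m) (h2 : m ≤ 0) :
    ⌈(m : ℚ) / (e : ℚ)⌉ = 0 := by
  have he' : (0:ℚ) < (e:ℚ) := by exact_mod_cast he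
  rw [Int.ceil_eq_zero_iff, Set.mem_Ioc]
  have h1' : -(e:ℚ) < (m:ℚ) := by exact_mod_cast h1
  constructor
  · rw [lt_div_iff₀ he']
    linarith
  · exact div_nonpos_of_nonpos_of_nonneg (by exact_mod_cast h2) he'.le

lemma ceil_div_one {e : ℕ} (he : 0 < e) {m : ℤ} (h1 : 0 < m) (h2 : m ≤ (e:ℤ)) :
    ⌈(m : ℚ) / (e : ℚ)⌉ = 1 := by
  have he' : (0:ℚ) < (e:ℚ) := by exact_mod_cast he
  have h1' : (0:ℚ) < (m:ℚ) := by exact_mod_cast h1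
  have h2' : (m:ℚ) ≤ (e:ℚ) := by exact_mod_cast h2
  rw [Int.ceil_eq_iff]
  constructor
  · push_cast
    simpa using div_pos h1' he'
  · push_cast
    rw [div_le_one he']
    exact h2'

lemma expo_superadd {e : ℕ} (he : 0 < e) (m₀ i i' r s c : ℕ) :
    expo e m₀ (i + i') r c ≤ expo e m₀ i r s + expo e m₀ i' s c := by
  have he' : (0:ℚ) < (e:ℚ) := by exact_mod_cast he
  have key : (((i + i' : ℕ) : ℚ) + (r / m₀ : ℕ) - ((c / m₀ : ℕ) : ℚ)) / (e : ℚ)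
      = ((i : ℚ) + (r / m₀ : ℕ) - ((s / m₀ : ℕ) : ℚ)) / (e : ℚ)
      + ((i' : ℚ) + (s / m₀ : ℕ) - ((c / m₀ : ℕ) : ℚ)) / (e : ℚ) := by
    field_simp
    push_cast
    ring
  unfold expo
  rw [key]
  exact Int.ceil_add_le _ _

lemma expo_base {e m₀ : ℕ} (he : 0 < e) {r c : ℕ} (ha : r / m₀ < e) (hb : c / m₀ < e) :
    expo e m₀ 1 r c = if r / m₀ < c / m₀ then 0 else 1 := by
  unfold expo
  generalize r / m₀ = a at ha ⊢
  generalize c / m₀ = b at hb ⊢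
  have hnum : ((1 : ℕ) : ℚ) + (a : ℚ) - (b : ℚ) = ((1 + (a : ℤ) - (b : ℤ) : ℤ) : ℚ) := by
    push_cast; ring
  rw [hnum]
  split_ifs with h
  · exact ceil_div_zero he (by omega) (by omega)
  · exact ceil_div_one he (by omega) (by omega)

lemma expo_zero {e m₀ : ℕ} (he : 0 < e) {r c : ℕ} (ha : r / m₀ < e) (hb : c / m₀ < e) :
    expo e m₀ 0 r c = if r / m₀ ≤ c / m₀ then 0 else 1 := by
  unfold expo
  generalize r / m₀ = a at ha ⊢
  generalize c / m₀ = b at hb ⊢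
  have hnum : ((0 : ℕ) : ℚ) + (a : ℚ) - (b : ℚ) = ((0 + (a : ℤ) - (b : ℤ) : ℤ) : ℚ) := by
    push_cast; ring
  rw [hnum]
  split_ifs with h
  · exact ceil_div_zero he (by omega) (by omega)
  · exact ceil_div_one he (by omega) (by omega)

lemma mem_blockMod {n m₀ : ℕ} {f : Fin n → Fin n → ℤ}
    {x : Matrix (Fin n) (Fin n) ℚ_[p]} (hx : x ∈ blockMod p n m₀ f) (i j : Fin n) :
    x i j ∈ pAdicLat p (f i j) := hx i j

lemma blockMod_mul {n m₀ : ℕ} {f g h : Fin n → Fin n → ℤ}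
    (H : ∀ r s c : Fin n, h r c ≤ f r s + g s c)
    {x y : Matrix (Fin n) (Fin n) ℚ_[p]}
    (hx : x ∈ blockMod p n m₀ f) (hy : y ∈ blockMod p n m₀ g) :
    x * y ∈ blockMod p n m₀ h := by
  intro r c
  show (x * y) r c ∈ pAdicLat p (h r c)
  rw [Matrix.mul_apply]
  refine Submodule.sum_mem _ fun s _ => ?_
  exact pAdicLat_mono p (H r s c) (mul_mem_pAdicLat p (hx r s) (hy s c))

lemma div_lt_e {e m₀ n : ℕ} (hm : 0 < m₀) (hn : n = e * m₀) (r : Fin n) :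
    r.val / m₀ < e :=
  Nat.div_lt_of_lt_mul (by rw [mul_comm]; exact hn ▸ r.2)

lemma radPow_pos_le {n e m₀ : ℕ} (he : 0 < e) (hm : 0 < m₀) (hn : n = e * m₀) (i : ℕ)
    (hi : 1 ≤ i) :
    stdRadical p n m₀ ^ i ≤ blockMod p n m₀ (fun r c => expo e m₀ i r.val c.val) := by
  induction i with
  | zero => omega
  | succ i ih =>
    rcases Nat.eq_or_lt_of_le hi with hi1 | hilt
    · -- i + 1 = 1
      obtain rfl : i = 0 := by omega
      rw [pow_one]
      intro x hx r c
      have := hx r c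
      show x r c ∈ pAdicLat p (expo e m₀ (0+1) r.val c.val)
      rwa [expo_base he (div_lt_e hm hn r) (div_lt_e hm hn c)]
    · have hi' : 1 ≤ i := by omega
      rw [pow_succ]
      rw [Submodule.mul_le]
      intro x hx y hy
      have hx' := ih hi' hx
      have hy' : y ∈ blockMod p n m₀ (fun r c => expo e m₀ 1 r.val c.val) := by
        intro r c
        have := hy r c
        show y r c ∈ pAdicLat p (expo e m₀ 1 r.val c.val)
        rwa [expo_base he (div_lt_e hm hn r) (div_lt_e hm hn c)]
      exact blockMod_mul p (fun r s c => expo_superadd he m₀ i 1 r.val s.val c.val) hx' hy'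

lemma stdOrder_le {n e m₀ : ℕ} (he : 0 < e) (hm : 0 < m₀) (hn : n = e * m₀) :
    stdOrder p n m₀ ≤ blockMod p n m₀ (fun r c => expo e m₀ 0 r.val c.val) := by
  intro x hx r c
  have := hx r c
  show x r c ∈ pAdicLat p (expo e m₀ 0 r.val c.val)
  rwa [expo_zero he (div_lt_e hm hn r) (div_lt_e hm hn c)]

end SCH

/-- Simple character: with `t = ⌈j/e⌉`, `k = ⌊j/2⌋ + 1` and `β` with `p^t β ∈ 𝔅^(et−j)`
(i.e. `v_𝔄(β) ≥ −j`), and `ψ` an additive character of `ℚ_p` trivial on `pℤ_p`,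
the map `x ↦ ψ(Tr(β(x−1)))` is multiplicative on `U_𝔄(k) = 1 + 𝔅^k`. -/
theorem simple_character_hom (p : ℕ) [Fact p.Prime] (n e m₀ : ℕ)
    (he : 0 < e) (hm : 0 < m₀) (hn : n = e * m₀)
    (j : ℕ) (hj : 1 ≤ j) (t k : ℕ)
    (ht : (t : ℤ) = ⌈(j : ℚ) / (e : ℚ)⌉) (hk : k = j / 2 + 1)
    (β : Matrix (Fin n) (Fin n) ℚ_[p])
    (hβ : ((p : ℚ_[p]) ^ t) • β ∈ radPow p n m₀ (e * t - j))
    (ψ : AddChar ℚ_[p] ℂˣ)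
    (hψ : ∀ x ∈ Submodule.span ℤ_[p] ({(p : ℚ_[p])} : Set ℚ_[p]), ψ x = 1) :
    ∀ u v : Matrix (Fin n) (Fin n) ℚ_[p],
      u - 1 ∈ stdRadical p n m₀ ^ k → v - 1 ∈ stdRadical p n m₀ ^ k →
      ψ ((β * (u * v - 1)).trace) = ψ ((β * (u - 1)).trace) * ψ ((β * (v - 1)).trace) := by
  intro u v hu hv
  have hpp : p.Prime := Fact.out
  have he' : (0:ℚ) < (e:ℚ) := by exact_mod_cast he
  have hppos : (0:ℝ) < (p:ℝ) := by exact_mod_cast hpp.pos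
  -- j ≤ e * t
  have het : j ≤ e * t := by
    have h1 : ((j:ℚ)/(e:ℚ)) ≤ ((t:ℤ):ℚ) := by
      rw [ht]; exact Int.le_ceil _
    rw [div_le_iff₀ he'] at h1
    push_cast at h1
    have h2 : (j:ℚ) ≤ ((e*t : ℕ) : ℚ) := by push_cast [Nat.cast_mul]; linarith
    exact_mod_cast h2
  have hk1 : 1 ≤ k := by omega
  have hkj : j < k + k := by omega
  set N := e * t - j with hN
  -- memberships in blockMod
  have hβ' : ((p : ℚ_[p]) ^ t) • β ∈ blockMod p n m₀ (fun r c => SCH.expo e m₀ N r.val c.val) := by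
    rw [radPow] at hβ
    by_cases h0 : N = 0
    · rw [if_pos h0] at hβ
      have := SCH.stdOrder_le p he hm hn hβ
      rwa [h0]
    · rw [if_neg h0] at hβ
      exact SCH.radPow_pos_le p he hm hn N (Nat.one_le_iff_ne_zero.mpr h0) hβ
  have hu' : u - 1 ∈ blockMod p n m₀ (fun r c => SCH.expo e m₀ k r.val c.val) :=
    SCH.radPow_pos_le p he hm hn k hk1 hu
  have hv' : v - 1 ∈ blockMod p n m₀ (fun r c => SCH.expo e m₀ k r.val c.val) :=
    SCH.radPow_pos_le p he hm hn k hk1 hv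
  have hprod : (((p : ℚ_[p]) ^ t) • β) * (u - 1) * (v - 1)
      ∈ blockMod p n m₀ (fun r c => SCH.expo e m₀ (N + k + k) r.val c.val) := by
    have h1 : (((p : ℚ_[p]) ^ t) • β) * (u - 1)
        ∈ blockMod p n m₀ (fun r c => SCH.expo e m₀ (N + k) r.val c.val) :=
      SCH.blockMod_mul p (fun r s c => SCH.expo_superadd he m₀ N k r.val s.val c.val) hβ' hu'
    exact SCH.blockMod_mul p
      (fun r s c => SCH.expo_superadd he m₀ (N + k) k r.val s.val c.val) h1 hv'
  -- trace bound
  have htrace : ((((p : ℚ_[p]) ^ t) • β) * (u - 1) * (v - 1)).trace ∈ pAdicLat p ((t : ℤ) + 1) := by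
    rw [Matrix.trace]
    refine Submodule.sum_mem _ fun r _ => ?_
    refine SCH.pAdicLat_mono p ?_ (hprod r r)
    show (t : ℤ) + 1 ≤ SCH.expo e m₀ (N + k + k) r.val r.val
    have hlt : (t : ℤ) < SCH.expo e m₀ (N + k + k) r.val r.val := by
      unfold SCH.expo
      rw [Int.lt_ceil, lt_div_iff₀ he']
      have hM : e * t < N + k + k := by omega
      have hM' : ((e:ℚ)) * (t:ℚ) < ((N + k + k : ℕ) : ℚ) := by exact_mod_cast hM
      push_cast at hM' ⊢
      linarith
    omega
  -- trace of the cross term lies in p ℤ_p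
  set C : ℚ_[p] := (β * ((u - 1) * (v - 1))).trace with hC
  have hsmul : ((((p : ℚ_[p]) ^ t) • β) * (u - 1) * (v - 1)).trace = ((p : ℚ_[p]) ^ t) * C := by
    rw [hC, smul_mul_assoc, smul_mul_assoc, Matrix.trace_smul, smul_eq_mul, mul_assoc]
  rw [hsmul, SCH.mem_pAdicLat_iff] at htrace
  have hCnorm : ‖C‖ ≤ (p:ℝ) ^ (-(1:ℤ)) := by
    have hnp : ‖((p : ℚ_[p]) ^ t)‖ = (p:ℝ) ^ (-(t:ℤ)) := by
      rw [← zpow_natCast ((p : ℚ_[p])) t, SCH.norm_p_zpow]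
    rw [norm_mul, hnp] at htrace
    calc ‖C‖ = (p:ℝ) ^ (t:ℤ) * ((p:ℝ) ^ (-(t:ℤ)) * ‖C‖) := by
          rw [← mul_assoc, ← zpow_add₀ hppos.ne', add_neg_cancel, zpow_zero, one_mul]
      _ ≤ (p:ℝ) ^ (t:ℤ) * (p:ℝ) ^ (-((t:ℤ) + 1)) :=
          mul_le_mul_of_nonneg_left htrace (by positivity)
      _ = (p:ℝ) ^ (-(1:ℤ)) := by
          rw [← zpow_add₀ hppos.ne']
          ring_nf
  have hCmem : C ∈ Submodule.span ℤ_[p] ({(p : ℚ_[p])} : Set ℚ_[p]) := by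
    have : C ∈ pAdicLat p 1 := by
      rw [SCH.mem_pAdicLat_iff]; exact hCnorm
    rwa [pAdicLat, zpow_one] at this
  have hψC : ψ C = 1 := hψ C hCmem
  -- decomposition
  have hdec : β * (u * v - 1) = β * ((u - 1) * (v - 1)) + (β * (u - 1) + β * (v - 1)) := by
    noncomm_ring
  rw [hdec, Matrix.trace_add, Matrix.trace_add, AddChar.map_add_eq_mul, AddChar.map_add_eq_mul, ← hC, hψC,
    one_mul]
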